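/- Let A₂ := {(x,y,z) ∈ ℝ³ : x² + y² = z⁴}. Then LD_0(A₂) = {(0,0,z) : z ∈ ℝ} (the z-axis) and L𝒢D_0(A₂) = ℝ³. -/

import Mathlib

open Filter Topology Set Asymptotics

variable {E : Type*} [NormedAddCommGroup E] [NormedSpace ℝ E]

/-- The direction set `D_p(A)`. -/
def dirSet (A : Set E) (p : E) : Set E :=
  {a | ‖a‖ = 1 ∧ ∃ x : ℕ → E, (∀ i, x i ∈ A ∧ x i ≠ p) ∧
    Tendsto x atTop (𝓝 p) ∧
    Tendsto (fun i => ‖x i - p‖⁻¹ • (x i - p)) atTop (𝓝 a)}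

/-- The real tangent cone `LD_p(A)`. -/
def LDir (A : Set E) (p : E) : Set E :=
  {w | ∃ a ∈ dirSet A p, ∃ t : ℝ, 0 ≤ t ∧ w = t • a}

/-- Condition (SSP) at `p`. -/
def SSP (A : Set E) (p : E) : Prop :=
  ∀ a : ℕ → E, (∀ m, a m ≠ p) → Tendsto a atTop (𝓝 p) →
    (∃ d ∈ dirSet A p, Tendsto (fun m => ‖a m - p‖⁻¹ • (a m - p)) atTop (𝓝 d)) →
    ∃ b : ℕ → E, (∀ m, b m ∈ A) ∧
      Tendsto (fun m => ‖a m - b m‖ / ‖a m - p‖) atTop (𝓝 0) ∧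
      Tendsto (fun m => ‖a m - b m‖ / ‖b m - p‖) atTop (𝓝 0)

/-- The geometric directional bundle fiber `𝒢D_p(A)`. -/
def GDir (A : Set E) (p : E) : Set E :=
  {a | ‖a‖ = 1 ∧ ∃ q : ℕ → E, (∀ m, q m ∈ A) ∧ Tendsto q atTop (𝓝 p) ∧
    ∃ u : ℕ → E, (∀ m, u m ∈ dirSet A (q m)) ∧ Tendsto u atTop (𝓝 a)}

/-- The cone `L𝒢D_p(A)` over the geometric directional bundle fiber. -/
def LGDir (A : Set E) (p : E) : Set E :=
  {w | ∃ a ∈ GDir A p, ∃ t : ℝ, 0 ≤ t ∧ w = t • a}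

/-- A bi-Lipschitz homeomorphism of `E`: a bijection which is Lipschitz with
Lipschitz inverse (equivalently, antilipschitz). -/
def IsBiLipschitz (h : E → E) : Prop :=
  Function.Bijective h ∧ ∃ K K' : NNReal, LipschitzWith K h ∧ AntilipschitzWith K' h


noncomputable def e3 (x y z : ℝ) : EuclideanSpace ℝ (Fin 3) := (WithLp.equiv 2 _).symm ![x, y, z]

@[simp] lemma e3_0 (x y z : ℝ) : e3 x y z 0 = x := rfl
@[simp] lemma e3_1 (x y z : ℝ) : e3 x y z 1 = y := rfl
@[simp] lemma e3_2 (x y z : ℝ) : e3 x y z 2 = z := rfl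

lemma norm3 (v : EuclideanSpace ℝ (Fin 3)) : ‖v‖ = Real.sqrt (v 0 ^ 2 + v 1 ^ 2 + v 2 ^ 2) := by
  rw [EuclideanSpace.norm_eq]
  simp [Fin.sum_univ_three, sq_abs]

lemma e3_ext (v : EuclideanSpace ℝ (Fin 3)) : v = e3 (v 0) (v 1) (v 2) := by
  ext i; fin_cases i <;> rfl

lemma e3_zero : e3 0 0 0 = (0 : EuclideanSpace ℝ (Fin 3)) := by
  ext i; fin_cases i <;> rfl

lemma tendsto_coord {x : ℕ → EuclideanSpace ℝ (Fin 3)} {a : EuclideanSpace ℝ (Fin 3)}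
    (h : Tendsto x atTop (𝓝 a)) (i : Fin 3) :
    Tendsto (fun m => x m i) atTop (𝓝 (a i)) := by
  have hc : Continuous (fun v : EuclideanSpace ℝ (Fin 3) => v i) :=
    (continuous_apply i).comp (PiLp.continuousLinearEquiv 2 ℝ (fun _ : Fin 3 => ℝ)).continuous
  exact (hc.tendsto a).comp h

lemma tendsto_e3 {x y z : ℕ → ℝ} {x0 y0 z0 : ℝ} (hx : Tendsto x atTop (𝓝 x0))
    (hy : Tendsto y atTop (𝓝 y0)) (hz : Tendsto z atTop (𝓝 z0)) :
    Tendsto (fun i => e3 (x i) (y i) (z i)) atTop (𝓝 (e3 x0 y0 z0)) := by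
  have h := (PiLp.continuousLinearEquiv 2 ℝ (fun _ : Fin 3 => ℝ)).symm.continuous.tendsto
      (![x0, y0, z0])
  refine h.comp ?_
  rw [tendsto_pi_nhds]
  intro i
  fin_cases i <;> simpa

lemma hasDerivAt_e3 {x y z : ℝ → ℝ} {x' y' z' t : ℝ} (hx : HasDerivAt x x' t)
    (hy : HasDerivAt y y' t) (hz : HasDerivAt z z' t) :
    HasDerivAt (fun s => e3 (x s) (y s) (z s)) (e3 x' y' z') t := by
  have h := ((PiLp.continuousLinearEquiv 2 ℝ (fun _ : Fin 3 => ℝ)).symm :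
      (Fin 3 → ℝ) →L[ℝ] EuclideanSpace ℝ (Fin 3)).hasFDerivAt (x := ![x t, y t, z t])
  have hp : HasDerivAt (fun s => ![x s, y s, z s]) ![x', y', z'] t := by
    rw [hasDerivAt_pi]
    intro i
    fin_cases i <;> simpa
  exact h.comp_hasDerivAt t hp

lemma curve_mem_dirSet {A : Set (EuclideanSpace ℝ (Fin 3))} {q : EuclideanSpace ℝ (Fin 3)}
    {γ : ℝ → EuclideanSpace ℝ (Fin 3)} {v : EuclideanSpace ℝ (Fin 3)}
    (hA : ∀ t, γ t ∈ A) (h0 : γ 0 = q) (hd : HasDerivAt γ v 0) (hv : v ≠ 0) :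
    ‖v‖⁻¹ • v ∈ dirSet A q := by
  have hslope : Tendsto (fun t : ℝ => t⁻¹ • (γ t - q)) (𝓝[>] (0:ℝ)) (𝓝 v) := by
    have := hasDerivAt_iff_tendsto_slope.1 hd
    have h2 : 𝓝[>] (0:ℝ) ≤ 𝓝[≠] (0:ℝ) :=
      nhdsWithin_mono _ (fun t ht => ne_of_gt ht)
    refine (this.mono_left h2).congr (fun t => ?_)
    simp [slope_def_module, h0]
  have hne : ∀ᶠ t in 𝓝[>] (0:ℝ), γ t ≠ q := by
    filter_upwards [hslope.eventually_ne hv, self_mem_nhdsWithin] with t ht ht0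
    intro h
    apply ht
    simp [h]
  obtain ⟨δ, hδ0, hδ⟩ : ∃ δ > 0, ∀ t, 0 < t → t ≤ δ → γ t ≠ q := by
    rcases (nhdsGT_basis (0:ℝ)).eventually_iff.1 hne with ⟨δ, hδ0, h⟩
    exact ⟨δ/2, by linarith, fun t ht1 ht2 => h ⟨ht1, lt_of_le_of_lt ht2 (by linarith)⟩⟩
  set T : ℕ → ℝ := fun i => δ / (i + 1) with hT
  have hTpos : ∀ i, 0 < T i := fun i => div_pos hδ0 (by positivity)
  have hTle : ∀ i, T i ≤ δ := by
    intro i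
    rw [hT, div_le_iff₀ (by positivity)]
    nlinarith [hδ0]
  have hTlim : Tendsto T atTop (𝓝[>] (0:ℝ)) := by
    apply tendsto_nhdsWithin_of_tendsto_nhds_of_eventually_within
    · have : Tendsto (fun i : ℕ => ((i:ℝ) + 1)⁻¹) atTop (𝓝 0) :=
        tendsto_one_div_add_atTop_nhds_zero_nat.congr (by intro i; rw [one_div])
      simpa [hT, div_eq_mul_inv] using this.const_mul δ
    · exact Eventually.of_forall (fun i => hTpos i)
  refine ⟨norm_smul_inv_norm hv, fun i => γ (T i),
    fun i => ⟨hA _, hδ _ (hTpos i) (hTle i)⟩, ?_, ?_⟩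
  · have : Tendsto γ (𝓝 0) (𝓝 q) := h0 ▸ hd.continuousAt.tendsto
    exact (this.mono_left nhdsWithin_le_nhds).comp hTlim
  · have key : Tendsto (fun t : ℝ => ‖t⁻¹ • (γ t - q)‖⁻¹ • (t⁻¹ • (γ t - q))) (𝓝[>] (0:ℝ))
        (𝓝 (‖v‖⁻¹ • v)) := ((hslope.norm.inv₀ (norm_ne_zero_iff.2 hv)).smul hslope)
    refine (key.comp hTlim).congr (fun i => ?_)
    have ht := hTpos i
    simp only [Function.comp]
    rw [norm_smul, norm_inv, Real.norm_eq_abs, abs_of_pos ht, smul_smul]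
    congr 1
    rw [mul_inv, inv_inv]
    field_simp

lemma curve_mem_dirSet' {A : Set (EuclideanSpace ℝ (Fin 3))} {q : EuclideanSpace ℝ (Fin 3)}
    {γ : ℝ → EuclideanSpace ℝ (Fin 3)} {v : EuclideanSpace ℝ (Fin 3)}
    (hA : ∀ t, γ t ∈ A) (h0 : γ 0 = q) (hd : HasDerivAt γ v 0) (hv : ‖v‖ = 1) :
    v ∈ dirSet A q := by
  have hv0 : v ≠ 0 := by intro h; rw [h] at hv; simp at hv
  have := curve_mem_dirSet hA h0 hd hv0
  rwa [hv, inv_one, one_smul] at this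

lemma unit_mem_GDir (a : EuclideanSpace ℝ (Fin 3)) (ha : ‖a‖ = 1) :
    a ∈ GDir {v : EuclideanSpace ℝ (Fin 3) | v 0 ^ 2 + v 1 ^ 2 = v 2 ^ 4} 0 := by
  set S := {v : EuclideanSpace ℝ (Fin 3) | v 0 ^ 2 + v 1 ^ 2 = v 2 ^ 4} with hS
  set A := a 0 with hA
  set B := a 1 with hB
  set C := a 2 with hC
  have hsum : A ^ 2 + B ^ 2 + C ^ 2 = 1 := by
    have := norm3 a
    rw [ha] at this
    have h1 : Real.sqrt (A ^ 2 + B ^ 2 + C ^ 2) = 1 := this.symm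
    nlinarith [Real.sq_sqrt (show (0:ℝ) ≤ A ^ 2 + B ^ 2 + C ^ 2 by positivity),
      h1]
  set s := Real.sqrt (A ^ 2 + B ^ 2) with hs
  have hs2 : s ^ 2 = A ^ 2 + B ^ 2 := Real.sq_sqrt (by positivity)
  obtain ⟨e₁, e₂, f₁, f₂, he, hf, hef, hfA, hfB⟩ :
      ∃ e₁ e₂ f₁ f₂ : ℝ, e₁ ^ 2 + e₂ ^ 2 = 1 ∧ f₁ ^ 2 + f₂ ^ 2 = 1 ∧
        e₁ * f₁ + e₂ * f₂ = 0 ∧ s * f₁ = A ∧ s * f₂ = B := by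
    by_cases h0 : s = 0
    · have hA0 : A = 0 := by nlinarith [hs2, h0]
      have hB0 : B = 0 := by nlinarith [hs2, h0]
      exact ⟨1, 0, 0, 1, by norm_num, by norm_num, by norm_num,
        by rw [hA0, mul_zero], by rw [hB0, mul_one]; exact h0⟩
    · refine ⟨B / s, -A / s, A / s, B / s, ?_, ?_, by ring, ?_, ?_⟩
      · field_simp; linarith [hs2]
      · field_simp; linarith [hs2]
      · field_simp
      · field_simp
  set z : ℕ → ℝ := fun m => 1 / (m + 1) with hz
  have hzpos : ∀ m, 0 < z m := fun m => by positivity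
  have hzlim : Tendsto z atTop (𝓝 0) := by
    rw [hz]
    exact tendsto_one_div_add_atTop_nhds_zero_nat
  set q : ℕ → EuclideanSpace ℝ (Fin 3) :=
    fun m => e3 ((z m) ^ 2 * e₁) ((z m) ^ 2 * e₂) (z m) with hq
  set v : ℕ → EuclideanSpace ℝ (Fin 3) :=
    fun m => e3 (2 * z m * C * e₁ + A) (2 * z m * C * e₂ + B) C with hv
  have hefAB : e₁ * A + e₂ * B = 0 := by
    rw [← hfA, ← hfB]; linear_combination s * hef
  have hvnorm : ∀ m, ‖v m‖ = Real.sqrt (4 * (z m) ^ 2 * C ^ 2 + 1) := by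
    intro m
    rw [hv, norm3]
    congr 1
    simp only [e3_0, e3_1, e3_2]
    linear_combination 4 * (z m) ^ 2 * C ^ 2 * he + 4 * (z m) * C * hefAB + hsum
  have hvne : ∀ m, v m ≠ 0 := by
    intro m h
    have h1 := hvnorm m
    rw [h, norm_zero] at h1
    have : Real.sqrt (4 * (z m) ^ 2 * C ^ 2 + 1) > 0 := Real.sqrt_pos.2 (by positivity)
    linarith [this, h1.symm]
  refine ⟨ha, q, ?_, ?_, fun m => ‖v m‖⁻¹ • v m, fun m => ?_, ?_⟩
  · intro m
    rw [hS]
    simp only [hq, mem_setOf_eq, e3_0, e3_1, e3_2]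
    linear_combination (z m) ^ 4 * he
  · rw [← e3_zero]
    exact tendsto_e3 (by simpa using (hzlim.pow 2).mul_const e₁)
      (by simpa using (hzlim.pow 2).mul_const e₂) hzlim
  · -- curve at stage m
    set zm := z m with hzm
    have hzm0 : zm > 0 := hzpos m
    set β := s / (2 * zm ^ 2) with hβ
    set γ : ℝ → EuclideanSpace ℝ (Fin 3) := fun t =>
      e3 ((zm + C * t) ^ 2 * ((1 - (β * t) ^ 2) * e₁ + 2 * (β * t) * f₁) / (1 + (β * t) ^ 2))
         ((zm + C * t) ^ 2 * ((1 - (β * t) ^ 2) * e₂ + 2 * (β * t) * f₂) / (1 + (β * t) ^ 2))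
         (zm + C * t) with hγ
    have hmem : ∀ t, γ t ∈ S := by
      intro t
      rw [hS, hγ]
      simp only [mem_setOf_eq, e3_0, e3_1, e3_2]
      have hD : (1 + (β * t) ^ 2) ≠ 0 := by positivity
      field_simp
      linear_combination ((zm + C * t) ^ 4 * (1 - (β * t) ^ 2) ^ 2) * he +
        ((zm + C * t) ^ 4 * 4 * (β * t) * (1 - (β * t) ^ 2)) * hef +
        ((zm + C * t) ^ 4 * 4 * (β * t) ^ 2) * hf
    have hγ0 : γ 0 = q m := by
      rw [hγ, hq]
      norm_num
      rfl
    have hderiv : HasDerivAt γ (v m) 0 := by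
      have hu : HasDerivAt (fun t : ℝ => β * t) β 0 := by
        simpa using (hasDerivAt_id (0:ℝ)).const_mul β
      have hZ : HasDerivAt (fun t : ℝ => zm + C * t) C 0 := by
        simpa using ((hasDerivAt_id (0:ℝ)).const_mul C).const_add zm
      have hZ2 : HasDerivAt (fun t : ℝ => (zm + C * t) ^ 2) (2 * zm * C) 0 := by
        have h := hZ.pow 2
        exact h.congr_deriv (by norm_num)
      have hD : HasDerivAt (fun t : ℝ => 1 + (β * t) ^ 2) 0 0 := by
        exact ((hu.pow 2).const_add 1).congr_deriv (by norm_num)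
      have hcoord : ∀ (c d : ℝ), HasDerivAt
          (fun t : ℝ => (zm + C * t) ^ 2 * ((1 - (β * t) ^ 2) * c + 2 * (β * t) * d) /
            (1 + (β * t) ^ 2)) (2 * zm * C * c + s * d) 0 := by
        intro c d
        have hN : HasDerivAt (fun t : ℝ => (1 - (β * t) ^ 2) * c + 2 * (β * t) * d)
            (2 * β * d) 0 := by
          have h1 := ((hu.pow 2).const_sub 1).mul_const c
          have h2 := (hu.const_mul 2).mul_const d
          have h3 := h1.add h2
          exact h3.congr_deriv (by norm_num)
        have h4 := (hZ2.mul hN).div hD (by norm_num)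
        refine h4.congr_deriv ?_
        have hzm' : zm ≠ 0 := ne_of_gt hzm0
        rw [hβ]
        field_simp
        ring
      have h0' := hcoord e₁ f₁
      have h1' := hcoord e₂ f₂
      rw [hfA] at h0'
      rw [hfB] at h1'
      exact hasDerivAt_e3 h0' h1' hZ
    exact curve_mem_dirSet hmem hγ0 hderiv (hvne m)
  · -- u m → a
    have hvlim : Tendsto v atTop (𝓝 a) := by
      have : Tendsto (fun m => e3 (2 * z m * C * e₁ + A) (2 * z m * C * e₂ + B) C)
          atTop (𝓝 (e3 A B C)) := by
        refine tendsto_e3 ?_ ?_ tendsto_const_nhds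
        · have h := (((hzlim.const_mul 2).mul_const C).mul_const e₁).add_const A
          rw [show (2 * (0:ℝ) * C * e₁ + A) = A by ring] at h
          exact h
        · have h := (((hzlim.const_mul 2).mul_const C).mul_const e₂).add_const B
          rw [show (2 * (0:ℝ) * C * e₂ + B) = B by ring] at h
          exact h
      rw [hv]
      convert this using 2
      exact e3_ext a
    have hnlim : Tendsto (fun m => ‖v m‖) atTop (𝓝 1) := by
      have := hvlim.norm
      rwa [ha] at this
    have := (hnlim.inv₀ one_ne_zero).smul hvlim
    simpa using this


lemma norm_e3_unit_pos : ‖e3 0 0 1‖ = 1 := by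
  rw [norm3]; norm_num

lemma norm_e3_unit_neg : ‖e3 0 0 (-1)‖ = 1 := by
  rw [norm3]; norm_num

lemma coord01_of_dirSet (a : EuclideanSpace ℝ (Fin 3))
    (ha : a ∈ dirSet {v : EuclideanSpace ℝ (Fin 3) | v 0 ^ 2 + v 1 ^ 2 = v 2 ^ 4} 0) :
    a 0 = 0 ∧ a 1 = 0 := by
  obtain ⟨-, x, hx, hxlim, hnlim⟩ := ha
  simp only [sub_zero] at hnlim
  have h0 := tendsto_coord hnlim 0
  have h1 := tendsto_coord hnlim 1
  have hg : Tendsto (fun m => (‖x m‖⁻¹ • x m) 0 ^ 2 + (‖x m‖⁻¹ • x m) 1 ^ 2) atTop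
      (𝓝 (a 0 ^ 2 + a 1 ^ 2)) := ((h0.pow 2).add (h1.pow 2))
  have hnorm : Tendsto (fun m => ‖x m‖ ^ 2) atTop (𝓝 0) := by
    have := (hxlim.norm).pow 2
    simpa using this
  have hbound : ∀ m, (‖x m‖⁻¹ • x m) 0 ^ 2 + (‖x m‖⁻¹ • x m) 1 ^ 2 ≤ ‖x m‖ ^ 2 := by
    intro m
    have hxm : x m 0 ^ 2 + x m 1 ^ 2 = x m 2 ^ 4 := (hx m).1
    have hn0 : 0 < ‖x m‖ := norm_pos_iff.2 (by simpa using (hx m).2)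
    have hsq : ‖x m‖ ^ 2 = x m 0 ^ 2 + x m 1 ^ 2 + x m 2 ^ 2 := by
      rw [norm3]
      exact Real.sq_sqrt (by positivity)
    have hcoord : ∀ i : Fin 3, (‖x m‖⁻¹ • x m) i = ‖x m‖⁻¹ * x m i := fun i => rfl
    rw [hcoord, hcoord]
    have h2 : x m 2 ^ 2 ≤ ‖x m‖ ^ 2 := by nlinarith
    have hdiv : (‖x m‖⁻¹ * x m 0) ^ 2 + (‖x m‖⁻¹ * x m 1) ^ 2
        = (x m 2 ^ 2) ^ 2 / ‖x m‖ ^ 2 := by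
      field_simp
      linear_combination hxm
    rw [hdiv, div_le_iff₀ (by positivity)]
    nlinarith
  have hzero : a 0 ^ 2 + a 1 ^ 2 = 0 :=
    tendsto_nhds_unique hg (squeeze_zero (fun m => by positivity) hbound hnorm)
  constructor <;> nlinarith

lemma e3_pos_mem_dirSet :
    e3 0 0 1 ∈ dirSet {v : EuclideanSpace ℝ (Fin 3) | v 0 ^ 2 + v 1 ^ 2 = v 2 ^ 4} 0 := by
  refine curve_mem_dirSet' (γ := fun t => e3 (t ^ 2) 0 t) (fun t => ?_) ?_ ?_ norm_e3_unit_pos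
  · simp only [mem_setOf_eq, e3_0, e3_1, e3_2]
    ring
  · simpa using e3_zero
  · refine hasDerivAt_e3 ?_ (hasDerivAt_const 0 0) (hasDerivAt_id 0)
    simpa using hasDerivAt_pow 2 (0:ℝ)

lemma e3_neg_mem_dirSet :
    e3 0 0 (-1) ∈ dirSet {v : EuclideanSpace ℝ (Fin 3) | v 0 ^ 2 + v 1 ^ 2 = v 2 ^ 4} 0 := by
  refine curve_mem_dirSet' (γ := fun t => e3 (t ^ 2) 0 (-t)) (fun t => ?_) ?_ ?_ norm_e3_unit_neg
  · simp only [mem_setOf_eq, e3_0, e3_1, e3_2]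
    ring
  · simpa using e3_zero
  · refine hasDerivAt_e3 ?_ (hasDerivAt_const 0 0) (hasDerivAt_id 0).neg
    simpa using hasDerivAt_pow 2 (0:ℝ)

theorem stmt13 :
    LDir {v : EuclideanSpace ℝ (Fin 3) | v 0 ^ 2 + v 1 ^ 2 = v 2 ^ 4} 0
        = {v : EuclideanSpace ℝ (Fin 3) | v 0 = 0 ∧ v 1 = 0} ∧
    LGDir {v : EuclideanSpace ℝ (Fin 3) | v 0 ^ 2 + v 1 ^ 2 = v 2 ^ 4} 0
        = Set.univ := by
  constructor
  · ext w
    simp only [mem_setOf_eq]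
    constructor
    · rintro ⟨a, ha, t, ht, rfl⟩
      obtain ⟨h0, h1⟩ := coord01_of_dirSet a ha
      constructor
      · show t * a 0 = 0
        rw [h0, mul_zero]
      · show t * a 1 = 0
        rw [h1, mul_zero]
    · rintro ⟨h0, h1⟩
      rcases le_or_gt 0 (w 2) with h | h
      · refine ⟨e3 0 0 1, e3_pos_mem_dirSet, w 2, h, ?_⟩
        ext i
        fin_cases i
        · show w 0 = w 2 * 0
          rw [h0, mul_zero]
        · show w 1 = w 2 * 0
          rw [h1, mul_zero]
        · show w 2 = w 2 * 1
          rw [mul_one]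
      · refine ⟨e3 0 0 (-1), e3_neg_mem_dirSet, -(w 2), by linarith, ?_⟩
        ext i
        fin_cases i
        · show w 0 = -(w 2) * 0
          rw [h0, mul_zero]
        · show w 1 = -(w 2) * 0
          rw [h1, mul_zero]
        · show w 2 = -(w 2) * (-1)
          ring
  · ext w
    simp only [mem_univ, iff_true]
    by_cases hw : w = 0
    · exact ⟨e3 0 0 1, unit_mem_GDir _ norm_e3_unit_pos, 0, le_refl 0,
        by rw [hw, zero_smul]⟩
    · refine ⟨‖w‖⁻¹ • w, unit_mem_GDir _ (norm_smul_inv_norm hw), ‖w‖, norm_nonneg w, ?_⟩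
      rw [smul_smul, mul_inv_cancel₀ (norm_ne_zero_iff.2 hw), one_smul]
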